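/- arXiv:2002.05206 — 3 statements merged into one kernel-verified Lean document; each statement's English description precedes it below -/
import Mathlib

section
/- For real numbers a > −1, p > 0, b with b ≤ p (so that p − b > 0 when b < p, and in particular for 0 < b < p), and a natural number n, the integral ∫_0^∞ x^a e^{−p x} L_n(b x) dx equals Γ(a+1) p^{−a−1} · ₂F₁(−n, a+1; 1; b/p), where ₂F₁ with first parameter −n is the terminating hypergeometric sum ∑_{j=0}^{n} ((−n)_j (a+1)_j / ((1)_j j!)) (b/p)^j. -/
open MeasureTheory Real Finset

/-- The classical (unnormalized) Laguerre polynomial. -/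
noncomputable def laguerre (n : ℕ) (x : ℝ) : ℝ :=
  ∑ k ∈ Finset.range (n + 1), (n.choose k : ℝ) * (-x) ^ k / (k.factorial : ℝ)

/-- Rising factorial (Pochhammer symbol) `(q)_j = q (q+1) ⋯ (q+j-1)`. -/
noncomputable def poch (q : ℝ) (j : ℕ) : ℝ :=
  ∏ i ∈ Finset.range j, (q + i)

lemma integ_aux {s r : ℝ} (hs : -1 < s) (hr : 0 < r) :
    IntegrableOn (fun t : ℝ => t ^ s * Real.exp (-(r * t))) (Set.Ioi 0) := by
  have h := Real.GammaIntegral_convergent (show (0:ℝ) < s + 1 by linarith)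
  have h2 : IntegrableOn (fun t : ℝ => Real.exp (-(r * t)) * (r * t) ^ (s + 1 - 1))
      (Set.Ioi 0) := by
    have := (integrableOn_Ioi_comp_mul_left_iff
      (fun x : ℝ => Real.exp (-x) * x ^ (s + 1 - 1)) 0 hr).mpr (by simpa using h)
    simpa using this
  have h3 : IntegrableOn (fun t : ℝ => r ^ s * (t ^ s * Real.exp (-(r * t))))
      (Set.Ioi 0) := by
    refine h2.congr_fun (fun t ht => ?_) measurableSet_Ioi
    rw [Set.mem_Ioi] at ht
    rw [add_sub_cancel_right]
    beta_reduce
    rw [Real.mul_rpow hr.le ht.le]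
    ring
  have h4 : IntegrableOn (fun t : ℝ => (r ^ s)⁻¹ * (r ^ s * (t ^ s * Real.exp (-(r * t)))))
      (Set.Ioi 0) := h3.const_mul _
  refine h4.congr_fun (fun t ht => ?_) measurableSet_Ioi
  have hrs : (r:ℝ) ^ s ≠ 0 := (Real.rpow_pos_of_pos hr s).ne'
  field_simp

lemma poch_succ (q : ℝ) (j : ℕ) : poch q (j + 1) = poch q j * (q + j) :=
  Finset.prod_range_succ _ j

lemma poch_one (j : ℕ) : poch 1 j = (j.factorial : ℝ) := by
  induction j with
  | zero => simp [poch]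
  | succ k ih =>
    rw [poch_succ, ih, Nat.factorial_succ]
    push_cast; ring

lemma poch_neg_nat (n j : ℕ) (hj : j ≤ n) :
    poch (-(n : ℝ)) j = (-1) ^ j * (n.descFactorial j : ℝ) := by
  induction j with
  | zero => simp [poch]
  | succ k ih =>
    rw [poch_succ, ih (le_of_lt (Nat.lt_of_succ_le hj)), Nat.descFactorial_succ]
    have hk : k < n := Nat.lt_of_succ_le hj
    have hc : (-(n:ℝ) + k) = -((n - k : ℕ) : ℝ) := by
      push_cast [Nat.cast_sub hk.le]; ring
    rw [hc]
    push_cast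
    ring

lemma gamma_poch (a : ℝ) (ha : 0 < a + 1) (k : ℕ) :
    Real.Gamma (a + 1 + k) = Real.Gamma (a + 1) * poch (a + 1) k := by
  induction k with
  | zero => simp [poch]
  | succ j ih =>
    have h1 : a + 1 + ((j:ℕ) + 1 : ℕ) = (a + 1 + j) + 1 := by push_cast; ring
    have h2 : (0:ℝ) < a + 1 + j := by positivity
    rw [h1, Real.Gamma_add_one h2.ne', ih, poch_succ]
    ring

theorem stmt3 (a p b : ℝ) (n : ℕ) (ha : -1 < a) (hp : 0 < p) (hb : b ≤ p) :
    ∫ x in Set.Ioi (0 : ℝ), x ^ a * Real.exp (-p * x) * laguerre n (b * x) =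
      Real.Gamma (a + 1) * p ^ (-a - 1) *
        ∑ j ∈ Finset.range (n + 1),
          poch (-(n : ℝ)) j * poch (a + 1) j / (poch 1 j * (j.factorial : ℝ)) * (b / p) ^ j := by
  have ha1 : (0:ℝ) < a + 1 := by linarith
  have hcong : ∀ x ∈ Set.Ioi (0:ℝ),
      x ^ a * Real.exp (-p * x) * laguerre n (b * x) =
      ∑ k ∈ Finset.range (n+1),
        ((n.choose k : ℝ) * (-b) ^ k / (k.factorial : ℝ)) *
          (x ^ (a + k) * Real.exp (-(p * x))) := by
    intro x hx
    rw [Set.mem_Ioi] at hx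
    unfold laguerre
    rw [Finset.mul_sum]
    refine Finset.sum_congr rfl (fun k _ => ?_)
    have h1 : x ^ (a + (k:ℝ)) = x ^ a * x ^ k := by
      rw [Real.rpow_add hx, Real.rpow_natCast]
    rw [h1]
    have h2 : (-(b * x)) ^ k = (-b) ^ k * x ^ k := by
      rw [show -(b * x) = (-b) * x by ring, mul_pow]
    rw [h2, neg_mul]
    ring
  rw [setIntegral_congr_fun measurableSet_Ioi hcong]
  have hint : ∀ k ∈ Finset.range (n+1), Integrable
      (fun x : ℝ => ((n.choose k : ℝ) * (-b) ^ k / (k.factorial : ℝ)) *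
        (x ^ (a + k) * Real.exp (-(p * x)))) (volume.restrict (Set.Ioi 0)) := by
    intro k _
    have hk' : (-1:ℝ) < a + k := by
      have := (Nat.cast_nonneg k : (0:ℝ) ≤ k); linarith
    exact (integ_aux hk' hp).const_mul _
  rw [MeasureTheory.integral_finset_sum _ hint, Finset.mul_sum]
  have heval : ∀ k ∈ Finset.range (n+1),
        ((n.choose k : ℝ) * (-b) ^ k / (k.factorial : ℝ)) *
          ∫ x in Set.Ioi (0:ℝ), x ^ (a + k) * Real.exp (-(p * x)) =
        Real.Gamma (a + 1) * p ^ (-a - 1) *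
          (poch (-(n : ℝ)) k * poch (a + 1) k / (poch 1 k * (k.factorial : ℝ)) * (b / p) ^ k) := by
      intro k hk
      rw [Finset.mem_range] at hk
      have hkn : k ≤ n := Nat.lt_succ_iff.mp hk
      have hexp : a + (k:ℝ) = (a + k + 1) - 1 := by ring
      have hpos : (0:ℝ) < a + k + 1 := by
        have := (Nat.cast_nonneg k : (0:ℝ) ≤ k); linarith
      rw [hexp, Real.integral_rpow_mul_exp_neg_mul_Ioi hpos hp]
      rw [show a + (k:ℝ) + 1 = a + 1 + k by ring, gamma_poch a ha1 k,
        poch_one, poch_neg_nat n k hkn, Nat.descFactorial_eq_factorial_mul_choose]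
      have hpow : (1 / p) ^ (a + 1 + (k:ℝ)) = p ^ (-a - 1) * ((p:ℝ) ^ k)⁻¹ := by
        rw [one_div, ← Real.rpow_neg_one p, ← Real.rpow_natCast p k,
          ← Real.rpow_mul hp.le, ← Real.rpow_neg hp.le, ← Real.rpow_add hp]
        congr 1
        ring
      rw [hpow]
      have hf : ((k.factorial : ℝ)) ≠ 0 := by positivity
      have hpk : ((p:ℝ) ^ k) ≠ 0 := by positivity
      have hG : Real.Gamma (a+1) ≠ 0 := (Real.Gamma_pos_of_pos ha1).ne'
      rw [div_pow, neg_pow b k]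
      push_cast
      field_simp
  refine Finset.sum_congr rfl (fun k hk => ?_)
  rw [MeasureTheory.integral_const_mul]
  exact heval k hk
end

section
/- For an exponentially distributed random variable γ with mean m > 0 (PDF f(x) = (1/m) e^{−x/m} on x ≥ 0), and parameters τ > 1, mB > 0, the expectation E[γ(k+1, (τ γ_E + τ − 1)/mB)] (lower incomplete gamma of the shifted-scaled exponential variable, for natural k) equals k! − k! e^{−(τ−1)/mB} ∑_{q=0}^{k} (1/q!) (1/mB)^q ∑_{a=0}^{q} binom(q,a) (τ−1)^{q−a} τ^a (1/m + τ/mB)^{−1−a} (1/m) Γ(1+a). -/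
open MeasureTheory Real Finset

section Aux
open Set Filter Asymptotics


lemma sum_deriv_eq (k : ℕ) (t : ℝ) :
    (∑ q ∈ range (k+1), (q : ℝ) * t ^ (q-1) / q.factorial)
      = ∑ q ∈ range k, t ^ q / q.factorial := by
  rw [Finset.sum_range_succ' (fun q => (q : ℝ) * t ^ (q-1) / q.factorial) k]
  simp only [Nat.cast_zero, zero_mul, zero_div, add_zero, Nat.add_sub_cancel]
  refine Finset.sum_congr rfl fun i _ => ?_
  have h : ((i+1).factorial : ℝ) = (i+1) * i.factorial := by
    push_cast [Nat.factorial_succ]; ring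
  rw [h]
  have hne : ((i:ℝ)+1) ≠ 0 := by positivity
  push_cast
  rw [mul_comm ((i:ℝ)+1) (i.factorial:ℝ), ← div_div, mul_div_assoc, mul_comm ((i:ℝ)+1) _,
    mul_div_assoc, div_self hne, mul_one]

lemma incGamma_closed (k : ℕ) (y : ℝ) :
    ∫ t in (0:ℝ)..y, t ^ k * Real.exp (-t)
      = (k.factorial : ℝ) - (k.factorial : ℝ) *
          (Real.exp (-y) * ∑ q ∈ range (k+1), y ^ q / q.factorial) := by
  have hfac : ((k.factorial : ℝ)) ≠ 0 := Nat.cast_ne_zero.mpr k.factorial_ne_zero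
  have hder : ∀ t : ℝ, HasDerivAt
      (fun y : ℝ => (k.factorial : ℝ) - (k.factorial : ℝ) *
        (Real.exp (-y) * ∑ q ∈ range (k+1), y ^ q / q.factorial))
      (t ^ k * Real.exp (-t)) t := by
    intro t
    have hS : HasDerivAt (fun y : ℝ => ∑ q ∈ range (k+1), y ^ q / q.factorial)
        (∑ q ∈ range (k+1), (q : ℝ) * t ^ (q-1) / q.factorial) t := by
      apply HasDerivAt.fun_sum
      intro q _
      exact (hasDerivAt_pow q t).div_const _
    have hE : HasDerivAt (fun y : ℝ => Real.exp (-y)) (-Real.exp (-t)) t := by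
      simpa using ((hasDerivAt_id t).neg.exp)
    have h2 := ((hE.fun_mul hS).const_mul ((k.factorial : ℝ))).const_sub ((k.factorial : ℝ))
    convert h2 using 1
    case e'_4 => rfl
    case e'_5 => rfl
    rw [sum_deriv_eq, Finset.sum_range_succ]
    field_simp
    ring
  rw [intervalIntegral.integral_eq_sub_of_hasDerivAt (fun t _ => hder t)
    ((continuous_pow k |>.mul (Real.continuous_exp.comp continuous_neg)).intervalIntegrable 0 y)]
  have h0 : ∑ q ∈ range (k+1), (0:ℝ) ^ q / q.factorial = 1 := by
    rw [Finset.sum_eq_single 0]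
    · simp
    · intro b _ hb; simp [zero_pow hb]
    · simp
  simp [h0]


lemma integrableOn_pow_mul_exp (a : ℕ) {c : ℝ} (hc : 0 < c) :
    IntegrableOn (fun x : ℝ => x ^ a * Real.exp (-(c * x))) (Ioi 0) := by
  apply integrable_of_isBigO_exp_neg (b := c/2) (half_pos hc)
    ((by fun_prop : Continuous fun x : ℝ => x ^ a * Real.exp (-(c * x))).continuousOn)
  have h0 : Tendsto (fun x : ℝ => x ^ (a:ℝ) * Real.exp (-(c/2) * x)) atTop (nhds 0) :=
    tendsto_rpow_mul_exp_neg_mul_atTop_nhds_zero a (c/2) (half_pos hc)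
  have h1 : (fun x : ℝ => x ^ (a:ℝ) * Real.exp (-(c/2) * x)) =O[atTop] (fun _ => (1:ℝ)) :=
    h0.isBigO_one ℝ
  have h2 := h1.mul (isBigO_refl (fun x : ℝ => Real.exp (-(c/2) * x)) atTop)
  refine h2.congr' ?_ ?_
  · filter_upwards [eventually_ge_atTop (0:ℝ)] with x hx
    rw [Real.rpow_natCast, mul_assoc, ← Real.exp_add]
    congr 1; ring
  · filter_upwards with x
    rw [one_mul]

lemma integral_pow_mul_exp (a : ℕ) {c : ℝ} (hc : 0 < c) :
    ∫ x in Ioi (0:ℝ), x ^ a * Real.exp (-(c * x))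
      = ((c ^ (a+1))⁻¹) * Real.Gamma ((a:ℝ)+1) := by
  have h := integral_rpow_mul_exp_neg_mul_Ioi (a := (a:ℝ)+1) (r := c) (by positivity) hc
  simp only [add_sub_cancel_right] at h
  rw [show ((a:ℝ)+1) = ((a+1 : ℕ) : ℝ) by push_cast; ring, Real.rpow_natCast] at h
  simp_rw [Real.rpow_natCast] at h
  rw [h, one_div, inv_pow]
  push_cast
  ring

/-- The lower incomplete gamma function `γ(s, x) = ∫_0^x t^{s-1} e^{-t} dt`. -/
noncomputable def lowerGamma (s x : ℝ) : ℝ :=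
  ∫ t in (0:ℝ)..x, t ^ (s - 1) * Real.exp (-t)

lemma lowerGamma_nat (k : ℕ) (y : ℝ) :
    lowerGamma (k + 1) y
      = (k.factorial : ℝ) - (k.factorial : ℝ) *
          (Real.exp (-y) * ∑ q ∈ range (k+1), y ^ q / q.factorial) := by
  rw [← incGamma_closed, lowerGamma]
  refine intervalIntegral.integral_congr fun t _ => ?_
  rw [add_sub_cancel_right, Real.rpow_natCast]

theorem stmt7 (k : ℕ) (m mB τ : ℝ) (hm : 0 < m) (hmB : 0 < mB) (hτ : 1 < τ) :
    ∫ x in Set.Ioi (0 : ℝ),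
        lowerGamma (k + 1) ((τ * x + τ - 1) / mB) * ((1 / m) * Real.exp (-x / m)) =
      (k.factorial : ℝ) -
        (k.factorial : ℝ) * Real.exp (-(τ - 1) / mB) *
          ∑ q ∈ Finset.range (k + 1), (1 / (q.factorial : ℝ)) * (1 / mB) ^ q *
            ∑ a ∈ Finset.range (q + 1),
              (q.choose a : ℝ) * (τ - 1) ^ (q - a) * τ ^ a *
                ((1 / m + τ / mB) ^ (a + 1))⁻¹ * (1 / m) * Real.Gamma (1 + a) := by
  have hτ0 : (0:ℝ) < τ := lt_trans one_pos hτ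
  set c : ℝ := 1/m + τ/mB with hc_def
  have hc : 0 < c := add_pos (by positivity) (div_pos hτ0 hmB)
  set C : ℕ → ℕ → ℝ := fun q a =>
    (k.factorial : ℝ) * Real.exp (-(τ-1)/mB) * (1/(q.factorial : ℝ)) * (1/mB)^q *
      (q.choose a : ℝ) * (τ-1)^(q-a) * τ^a * (1/m) with hC_def
  have hpt : ∀ x : ℝ,
      lowerGamma (k + 1) ((τ * x + τ - 1) / mB) * ((1 / m) * Real.exp (-x / m))
        = ((k.factorial : ℝ) * (1/m)) * (x ^ (0:ℕ) * Real.exp (-((1/m) * x)))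
          - ∑ q ∈ range (k+1), ∑ a ∈ range (q+1),
              C q a * (x ^ a * Real.exp (-(c * x))) := by
    intro x
    rw [lowerGamma_nat]
    have hy : ∀ q : ℕ, ((τ*x+τ-1)/mB)^q
        = ∑ a ∈ range (q+1), (q.choose a : ℝ) * (τ-1)^(q-a) * τ^a * x^a * (1/mB)^q := by
      intro q
      rw [div_pow, show τ*x+τ-1 = τ*x + (τ-1) by ring, add_pow, Finset.sum_div]
      refine Finset.sum_congr rfl fun a _ => ?_
      rw [mul_pow]
      ring
    have hEsplit : Real.exp (-((τ*x+τ-1)/mB))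
        = Real.exp (-(τ-1)/mB) * Real.exp (-((τ/mB) * x)) := by
      rw [← Real.exp_add]; congr 1; field_simp; ring
    have hE2 : Real.exp (-(c * x)) = Real.exp (-((τ/mB) * x)) * Real.exp (-x/m) := by
      rw [← Real.exp_add]; congr 1; rw [hc_def]; field_simp; ring
    have hE3 : Real.exp (-((1/m) * x)) = Real.exp (-x/m) := by
      congr 1; ring
    simp only [hy, hE2, hEsplit, hE3, pow_zero, one_mul, Finset.mul_sum, Finset.sum_mul,
      Finset.sum_div, sub_mul]
    congr 1
    · ring
    refine Finset.sum_congr rfl fun q _ => Finset.sum_congr rfl fun a _ => ?_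
    simp only [hC_def]
    ring
  simp only [hpt]
  have hP : IntegrableOn
      (fun x : ℝ => ((k.factorial : ℝ) * (1/m)) * (x ^ (0:ℕ) * Real.exp (-((1/m) * x))))
      (Ioi 0) := (integrableOn_pow_mul_exp 0 (by positivity)).const_mul _
  have hterm : ∀ q a : ℕ, IntegrableOn
      (fun x : ℝ => C q a * (x ^ a * Real.exp (-(c * x)))) (Ioi 0) :=
    fun q a => (integrableOn_pow_mul_exp a hc).const_mul _
  have hG : IntegrableOn
      (fun x : ℝ => ∑ q ∈ range (k+1), ∑ a ∈ range (q+1),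
        C q a * (x ^ a * Real.exp (-(c * x)))) (Ioi 0) := by
    apply integrable_finset_sum
    intro q _
    exact integrable_finset_sum _ fun a _ => hterm q a
  rw [integral_sub hP hG]
  rw [integral_finset_sum _ (fun q _ => integrable_finset_sum _ fun a _ => hterm q a)]
  have hsum : ∀ q ∈ range (k+1),
      (∫ x in Ioi (0:ℝ), ∑ a ∈ range (q+1), C q a * (x ^ a * Real.exp (-(c * x))))
        = ∑ a ∈ range (q+1), C q a * (((c ^ (a+1))⁻¹) * Real.Gamma ((a:ℝ)+1)) := by
    intro q _
    rw [integral_finset_sum _ (fun a _ => hterm q a)]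
    refine Finset.sum_congr rfl fun a _ => ?_
    rw [integral_const_mul, integral_pow_mul_exp a hc]
  rw [Finset.sum_congr rfl hsum]
  rw [integral_const_mul, integral_pow_mul_exp 0 (by positivity : (0:ℝ) < 1/m)]
  have hfirst : (k.factorial : ℝ) * (1/m) * (((1/m) ^ (0+1:ℕ))⁻¹ * Real.Gamma ((0:ℕ)+1)) 
      = (k.factorial : ℝ) := by
    simp [Real.Gamma_one]
    field_simp
  rw [hfirst]
  congr 1
  rw [Finset.mul_sum]
  refine Finset.sum_congr rfl fun q _ => ?_
  rw [Finset.mul_sum, Finset.mul_sum]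
  refine Finset.sum_congr rfl fun a _ => ?_
  simp only [hC_def]
  rw [show ((1:ℝ) + (a:ℝ)) = ((a:ℝ)+1) by ring]
  ring

end Aux
end

section
/- For independent exponentials γ_B ∼ Exp(ḡ_B), γ_E ∼ Exp(ḡ_E) and fixed ḡ_E, τ > 1, as ḡ_B → ∞ the secrecy outage probability satisfies SOP · ḡ_B → τ ḡ_E + (τ − 1); in particular the secrecy diversity order is 1 and the array gain is (τ ḡ_E + τ − 1)^{−1}. -/
open MeasureTheory Real Filter Topology

/-- Closed-form secrecy outage probability for the Rayleigh/Rayleigh wiretap channel,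
as a function of Bob's average SNR `gB`. -/
noncomputable def raylSOP (τ gE gB : ℝ) : ℝ :=
  1 - (gB / (gB + τ * gE)) * Real.exp (-(τ - 1) / gB)

theorem stmt10 (τ gE : ℝ) (hτ : 1 < τ) (hgE : 0 < gE) :
    Filter.Tendsto (fun gB : ℝ => raylSOP τ gE gB * gB) Filter.atTop
      (nhds (τ * gE + (τ - 1))) := by
  have hb : (0:ℝ) < τ - 1 := by linarith
  have ha : 0 < τ * gE := by nlinarith
  set a := τ * gE with hA
  set b := τ - 1 with hB
  clear_value a b
  have hu0 : Tendsto (fun g : ℝ => -b / g) atTop (𝓝 0) := by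
    have := tendsto_inv_atTop_zero (𝕜 := ℝ) |>.const_mul (-b)
    simpa [div_eq_mul_inv] using this
  have hu : Tendsto (fun g : ℝ => -b / g) atTop (𝓝[≠] (0:ℝ)) := by
    rw [tendsto_nhdsWithin_iff]
    refine ⟨hu0, ?_⟩
    filter_upwards [eventually_gt_atTop (0:ℝ)] with g hg
    have : -b / g < 0 := div_neg_of_neg_of_pos (by linarith) hg
    exact ne_of_lt this
  have hslope : Tendsto (fun y : ℝ => (Real.exp y - 1) / y) (𝓝[≠] 0) (𝓝 1) := by
    have h := Real.hasDerivAt_exp 0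
    rw [hasDerivAt_iff_tendsto_slope] at h
    simpa [slope_fun_def, Real.exp_zero, div_eq_inv_mul] using h
  have h1 : Tendsto (fun g : ℝ => (Real.exp (-b / g) - 1) / (-b / g)) atTop (𝓝 1) :=
    hslope.comp hu
  have hexp : Tendsto (fun g : ℝ => Real.exp (-b / g)) atTop (𝓝 1) := by
    simpa [Function.comp_def] using (Real.continuous_exp.tendsto 0).comp hu0
  have hga : Tendsto (fun g : ℝ => g + a) atTop atTop :=
    tendsto_atTop_add_const_right _ a tendsto_id
  have hfrac : Tendsto (fun g : ℝ => a * g / (g + a)) atTop (𝓝 a) := by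
    have h2 : Tendsto (fun g : ℝ => a - a ^ 2 * (g + a)⁻¹) atTop (𝓝 (a - a ^ 2 * 0)) :=
      tendsto_const_nhds.sub ((hga.inv_tendsto_atTop).const_mul _)
    rw [mul_zero, sub_zero] at h2
    refine h2.congr' ?_
    filter_upwards [eventually_gt_atTop (0:ℝ)] with g hg
    have hga0 : g + a ≠ 0 := by positivity
    field_simp
    ring
  have hmain : Tendsto
      (fun g : ℝ => b * ((Real.exp (-b / g) - 1) / (-b / g)) +
        Real.exp (-b / g) * (a * g / (g + a))) atTop (𝓝 (b * 1 + 1 * a)) :=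
    (h1.const_mul b).add (hexp.mul hfrac)
  have hval : b * 1 + 1 * a = a + b := by ring
  rw [hval] at hmain
  refine hmain.congr' ?_
  filter_upwards [eventually_gt_atTop (0:ℝ)] with g hg
  have hg0 : g ≠ 0 := ne_of_gt hg
  have hga0 : g + a ≠ 0 := by positivity
  have hb0 : b ≠ 0 := ne_of_gt hb
  show _ = raylSOP τ gE g * g
  rw [raylSOP, ← hA, show -(τ - 1) / g = -b / g by rw [hB]]
  set E := Real.exp (-b / g) with hE
  clear_value E
  have key : b * ((E - 1) / (-b / g)) = g * (1 - E) := by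
    rw [div_div_eq_mul_div, mul_comm, div_neg, neg_mul, div_mul_cancel₀ _ hb0]
    ring
  rw [key]
  field_simp
  ring
end
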